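/- For each 1 ≤ k ≤ m, the map ψ_k : 𝒩_{k−1} → 𝒩_k is injective. -/
import Mathlib


open Finset

/-- The support of a signed subset `X = (X⁺, X⁻)`. -/
def supp {α : Type} [DecidableEq α] (X : Finset α × Finset α) : Finset α := X.1 ∪ X.2

/-- An oriented matroid on ground set `α`, given by its collection of signed circuits,
satisfying the signed circuit axioms (C1)-(C4). -/
structure OM (α : Type) [DecidableEq α] where
  C : Set (Finset α × Finset α)
  disj : ∀ X ∈ C, Disjoint X.1 X.2
  not_empty_mem : ((∅ : Finset α), (∅ : Finset α)) ∉ C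
  neg_mem : ∀ X ∈ C, (X.2, X.1) ∈ C
  incomp : ∀ X ∈ C, ∀ Y ∈ C, supp X ⊆ supp Y → X = Y ∨ X = (Y.2, Y.1)
  elimAx : ∀ X ∈ C, ∀ Y ∈ C, X ≠ Y → X ≠ (Y.2, Y.1) → ∀ e ∈ X.1 ∩ Y.2,
    ∃ Z ∈ C, Z.1 ⊆ (X.1 ∪ Y.1).erase e ∧ Z.2 ⊆ (X.2 ∪ Y.2).erase e

/-- A collection of signed subsets is acyclic if it contains no positive member. -/
def Acyclic {α : Type} (C : Set (Finset α × Finset α)) : Prop :=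
  ∀ X ∈ C, X.2 ≠ ∅

/-- Reorientation of a signed subset by `A`. -/
def reorient {α : Type} [DecidableEq α] (A : Finset α) (X : Finset α × Finset α) :
    Finset α × Finset α :=
  ((X.1 \ A) ∪ (X.2 ∩ A), (X.2 \ A) ∪ (X.1 ∩ A))

/-- Reorientation of a collection of signed subsets by `A`. -/
def reorientC {α : Type} [DecidableEq α] (A : Finset α)
    (C : Set (Finset α × Finset α)) : Set (Finset α × Finset α) :=
  reorient A '' C

/-- Deletion: keep the members whose support avoids `D`. -/
def delC {α : Type} [DecidableEq α] (D : Finset α)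
    (C : Set (Finset α × Finset α)) : Set (Finset α × Finset α) :=
  {X ∈ C | Disjoint (supp X) D}

/-- The pre-circuits of the contraction by `T`. -/
def contrPre {α : Type} [DecidableEq α] (T : Finset α)
    (C : Set (Finset α × Finset α)) : Set (Finset α × Finset α) :=
  {Z | ∃ Y ∈ C, supp Y \ T ≠ ∅ ∧ Z = (Y.1 \ T, Y.2 \ T)}

/-- Contraction: the support-inclusion-minimal members of `contrPre T C`. -/
def contrC {α : Type} [DecidableEq α] (T : Finset α)
    (C : Set (Finset α × Finset α)) : Set (Finset α × Finset α) :=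
  {Z ∈ contrPre T C | ∀ W ∈ contrPre T C, supp W ⊆ supp Z → supp W = supp Z}

/-- `N` is an NBC subset of the underlying matroid of `M`: it contains no
broken circuit, i.e. no circuit of the underlying matroid with its maximal
element deleted. -/
def IsNBC {α : Type} [DecidableEq α] [LinearOrder α] (M : OM α) (N : Finset α) : Prop :=
  ∀ X ∈ M.C, ∀ h : (supp X).Nonempty, ¬ (supp X).erase ((supp X).max' h) ⊆ N

/-- `E_k = {e₁, …, e_k}`: the first `k` elements of the ground set `Fin m`. -/
def Ek (m k : ℕ) : Finset (Fin m) := Finset.filter (fun i => (i : ℕ) < k) Finset.univ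

/-- `M` is loopless: no signed circuit has support of size one. -/
def Loopless {m : ℕ} (M : OM (Fin m)) : Prop := ∀ X ∈ M.C, (supp X).card ≠ 1

/-- `M(N, A) = ₋ₐ(M ∖ (E_k − N) / N)`. -/
def MNA {m : ℕ} (M : OM (Fin m)) (k : ℕ) (N A : Finset (Fin m)) :
    Set (Finset (Fin m) × Finset (Fin m)) :=
  reorientC A (contrC N (delC (Ek m k \ N) M.C))

/-- The set `𝒩_k` of pairs `(N, A)` with `N ⊆ E_k` an NBC subset of the underlying
matroid, `A ⊆ E − E_k`, and `M(N, A)` acyclic. -/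
def NFam {m : ℕ} (M : OM (Fin m)) (k : ℕ) : Set (Finset (Fin m) × Finset (Fin m)) :=
  {p | p.1 ⊆ Ek m k ∧ IsNBC M p.1 ∧ p.2 ⊆ (Ek m k)ᶜ ∧ Acyclic (MNA M k p.1 p.2)}

open scoped Classical in
/-- The map `ψ_k` (where `j = k - 1` and `e = e_k`), defined on `𝒩_{k-1}`:
`ψ_k(N, A) = (N ∪ {e_k}, A)` if `e_k ∉ A` and `₋{e_k}M(N, A)` is acyclic,
`ψ_k(N, A) = (N, A)` if `e_k ∉ A` and `₋{e_k}M(N, A)` is not acyclic, and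
`ψ_k(N, A) = (N, A − {e_k})` if `e_k ∈ A`. -/
noncomputable def psi {m : ℕ} (M : OM (Fin m)) (j : ℕ) (e : Fin m)
    (p : Finset (Fin m) × Finset (Fin m)) : Finset (Fin m) × Finset (Fin m) :=
  if e ∈ p.2 then (p.1, p.2.erase e)
  else if Acyclic (reorientC {e} (MNA M j p.1 p.2)) then (insert e p.1, p.2)
  else p

lemma reorient_insert {α : Type} [DecidableEq α] (e : α) (B : Finset α)
    (he : e ∉ B) (X : Finset α × Finset α) :
    reorient {e} (reorient B X) = reorient (insert e B) X := by
  unfold reorient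
  refine Prod.ext ?_ ?_ <;>
  · ext a
    by_cases hae : a = e <;> by_cases haB : a ∈ B <;> simp_all <;> tauto

lemma reorientC_insert {α : Type} [DecidableEq α] (e : α) (B : Finset α)
    (he : e ∉ B) (C : Set (Finset α × Finset α)) :
    reorientC {e} (reorientC B C) = reorientC (insert e B) C := by
  unfold reorientC
  rw [Set.image_image]
  exact Set.image_congr fun X _ => reorient_insert e B he X

lemma MNA_erase {m : ℕ} (M : OM (Fin m)) (j : ℕ) (N A : Finset (Fin m)) (e : Fin m)
    (he : e ∈ A) :
    reorientC {e} (MNA M j N (A.erase e)) = MNA M j N A := by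
  unfold MNA
  rw [reorientC_insert e (A.erase e) (Finset.notMem_erase e A), Finset.insert_erase he]

lemma psi_injOn {m : ℕ} (M : OM (Fin m)) (j : ℕ) (e : Fin m) (he : e ∉ Ek m j) :
    Set.InjOn (psi M j e) (NFam M j) := by
  intro p hp q hq h
  obtain ⟨hp1, hp2, hp3, hp4⟩ := hp
  obtain ⟨hq1, hq2, hq3, hq4⟩ := hq
  have hep : e ∉ p.1 := fun hx => he (hp1 hx)
  have heq : e ∉ q.1 := fun hx => he (hq1 hx)
  unfold psi at h
  by_cases h1 : e ∈ p.2 <;> by_cases h2 : e ∈ q.2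
  · simp only [h1, h2, if_pos] at h
    obtain ⟨hN, hA⟩ := Prod.ext_iff.mp h
    dsimp only at hN hA
    have : p.2 = q.2 := by
      rw [← Finset.insert_erase h1, ← Finset.insert_erase h2, hA]
    exact Prod.ext hN this
  · simp only [h1, h2, if_pos, if_neg, if_false] at h
    by_cases h3 : Acyclic (reorientC {e} (MNA M j q.1 q.2))
    · rw [if_pos h3] at h
      obtain ⟨hN, _⟩ := Prod.ext_iff.mp h
      exact absurd (hN ▸ Finset.mem_insert_self e q.1 : e ∈ p.1) hep
    · rw [if_neg h3] at h
      obtain ⟨hN, hA⟩ := Prod.ext_iff.mp h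
      rw [← hN, ← hA, MNA_erase M j p.1 p.2 e h1] at h3
      exact absurd hp4 h3
  · simp only [h1, h2, if_pos, if_neg, if_false] at h
    by_cases h3 : Acyclic (reorientC {e} (MNA M j p.1 p.2))
    · rw [if_pos h3] at h
      obtain ⟨hN, _⟩ := Prod.ext_iff.mp h
      exact absurd (hN ▸ Finset.mem_insert_self e p.1 : e ∈ q.1) heq
    · rw [if_neg h3] at h
      obtain ⟨hN, hA⟩ := Prod.ext_iff.mp h
      rw [hN, hA, MNA_erase M j q.1 q.2 e h2] at h3
      exact absurd hq4 h3
  · simp only [h1, h2, if_neg, if_false] at h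
    by_cases h3 : Acyclic (reorientC {e} (MNA M j p.1 p.2)) <;>
      by_cases h4 : Acyclic (reorientC {e} (MNA M j q.1 q.2))
    · rw [if_pos h3, if_pos h4] at h
      obtain ⟨hN, hA⟩ := Prod.ext_iff.mp h
      dsimp only at hN hA
      have : p.1 = q.1 := by
        rw [← Finset.erase_insert hep, ← Finset.erase_insert heq, hN]
      exact Prod.ext this hA
    · rw [if_pos h3, if_neg h4] at h
      obtain ⟨hN, _⟩ := Prod.ext_iff.mp h
      exact absurd (hN ▸ Finset.mem_insert_self e p.1 : e ∈ q.1) heq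
    · rw [if_neg h3, if_pos h4] at h
      obtain ⟨hN, _⟩ := Prod.ext_iff.mp h
      exact absurd (hN.symm ▸ Finset.mem_insert_self e q.1 : e ∈ p.1) hep
    · rwa [if_neg h3, if_neg h4] at h

/-- **Injectivity of `ψ_k`** on `𝒩_{k−1}`. -/
theorem stmt_4 (m : ℕ) (M : OM (Fin m)) (hM : Loopless M)
    (k : ℕ) (hk1 : 1 ≤ k) (hkm : k ≤ m) :
    Set.InjOn (psi M (k - 1) ⟨k - 1, by omega⟩) (NFam M (k - 1)) := by
  exact psi_injOn M (k-1) _ (by simp [Ek])
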